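/- Suppose q ∈ K is a primitive l-th root of unity with l ≥ 2. In the rank-one quantized Weyl algebra A₁^q with z := 1 + (q-1)yx, one has the identity z^l = 1 + q^{l(l-1)/2}(q-1)^l · y^l x^l. -/

import Mathlib

noncomputable section

/-- Relation defining the rank-one quantized Weyl algebra: x*y - q*(y*x) = 1. -/
inductive WeylRel (K : Type*) [Field K] (q : K) :
    FreeAlgebra K (Fin 2) → FreeAlgebra K (Fin 2) → Prop
  | rel : WeylRel K q (FreeAlgebra.ι K (0 : Fin 2) * FreeAlgebra.ι K 1 -
      algebraMap K _ q * (FreeAlgebra.ι K 1 * FreeAlgebra.ι K 0)) 1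

/-- The rank-one quantized Weyl algebra A₁^q. -/
abbrev Weyl (K : Type*) [Field K] (q : K) := RingQuot (WeylRel K q)

/-- The generator x of A₁^q. -/
def wx (K : Type*) [Field K] (q : K) : Weyl K q :=
  RingQuot.mkAlgHom K (WeylRel K q) (FreeAlgebra.ι K 0)

/-- The generator y of A₁^q. -/
def wy (K : Type*) [Field K] (q : K) : Weyl K q :=
  RingQuot.mkAlgHom K (WeylRel K q) (FreeAlgebra.ι K 1)

namespace WeylAux

open Polynomial Finset

variable {K : Type*} [Field K] (q : K)

lemma weyl_comm : wx K q * wy K q = q • (wy K q * wx K q) + 1 := by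
  have h := RingQuot.mkAlgHom_rel K (WeylRel.rel (K := K) (q := q))
  simp only [map_sub, map_mul, map_one, AlgHom.commutes] at h
  rw [wx, wy]
  rw [sub_eq_iff_eq_add'] at h
  rw [h, Algebra.smul_def]

/-- z -/
def wz : Weyl K q := 1 + (q - 1) • (wy K q * wx K q)

lemma wz_wy : wz q * wy K q = q • (wy K q * wz q) := by
  have h := weyl_comm q
  simp only [wz, add_mul, one_mul, mul_assoc, h, mul_add, mul_one, mul_smul_comm,
    smul_mul_assoc, smul_add, smul_smul]
  module

lemma wz_wy_pow (k : ℕ) : wz q * wy K q ^ k = q ^ k • (wy K q ^ k * wz q) := by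
  induction k with
  | zero => simp
  | succ n ih =>
    rw [pow_succ, ← mul_assoc, ih, smul_mul_assoc, mul_assoc, wz_wy, pow_succ]
    rw [mul_smul_comm, smul_smul, mul_assoc]

lemma wz_E (k : ℕ) : wz q * (wy K q ^ k * wx K q ^ k)
    = (q ^ k) • (wy K q ^ k * wx K q ^ k)
      + (q ^ k * (q - 1)) • (wy K q ^ (k + 1) * wx K q ^ (k + 1)) := by
  rw [← mul_assoc, wz_wy_pow, smul_mul_assoc, mul_assoc]
  simp only [wz, add_mul, mul_add, one_mul, mul_one, smul_mul_assoc, mul_smul_comm,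
    smul_add, smul_smul, pow_succ (wy K q), pow_succ' (wx K q), mul_assoc]

/-- The q-product polynomial ∏ (1 + q^i X). -/
def P (n : ℕ) : K[X] := ∏ i ∈ Finset.range n, (1 + C (q ^ i) * X)

lemma coeff_comp_C_mul_X (p : K[X]) (a : K) (k : ℕ) :
    (p.comp (C a * X)).coeff k = a ^ k * p.coeff k := by
  induction p using Polynomial.induction_on' with
  | add p r hp hr => simp [add_comp, hp, hr, mul_add]
  | monomial n c =>
    rw [monomial_comp, mul_pow, ← C_pow, ← mul_assoc, ← C_mul, coeff_C_mul_X_pow,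
      coeff_monomial]
    split_ifs with h1 h2 h2
    · subst h2; ring
    · exact absurd h1.symm h2
    · exact absurd h2.symm h1
    · ring


lemma P_succ (n : ℕ) : P q (n + 1) = P q n * (1 + C (q ^ n) * X) :=
  Finset.prod_range_succ _ n

lemma P_succ' (n : ℕ) : P q (n + 1) = (1 + X) * (P q n).comp (C q * X) := by
  rw [P, Finset.prod_range_succ', P, Polynomial.prod_comp, mul_comm]
  congr 1
  · simp
  · refine Finset.prod_congr rfl fun i _ => ?_
    rw [add_comp, one_comp, mul_comp, C_comp, X_comp, ← mul_assoc, ← C_mul, ← pow_succ]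

lemma coeff_P_succ (n k : ℕ) : (P q (n + 1)).coeff k
    = q ^ k * (P q n).coeff k
      + (if k = 0 then 0 else q ^ (k - 1) * (P q n).coeff (k - 1)) := by
  rw [P_succ', add_mul, one_mul, coeff_add, coeff_comp_C_mul_X]
  congr 1
  cases k with
  | zero => simp [mul_coeff_zero]
  | succ m => simp [coeff_X_mul, coeff_comp_C_mul_X]; ring

lemma P_natDegree_le (n : ℕ) : (P q n).natDegree ≤ n := by
  refine le_trans (Polynomial.natDegree_prod_le _ _) ?_
  refine le_trans (Finset.sum_le_card_nsmul _ _ 1 fun i _ => ?_) (by simp)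
  refine le_trans (natDegree_add_le _ _) ?_
  simp only [natDegree_one, max_le_iff]
  exact ⟨Nat.zero_le _, le_trans (natDegree_C_mul_le _ _) natDegree_X_le⟩

lemma coeff_P_eq_zero {n k : ℕ} (h : n < k) : (P q n).coeff k = 0 :=
  coeff_eq_zero_of_natDegree_lt (lt_of_le_of_lt (P_natDegree_le q n) h)

lemma z_pow (n : ℕ) : wz q ^ n = ∑ k ∈ Finset.range (n + 1),
    ((P q n).coeff k * (q - 1) ^ k) • (wy K q ^ k * wx K q ^ k) := by
  induction n with
  | zero => simp [P]
  | succ n ih =>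
    rw [pow_succ', ih, Finset.mul_sum]
    simp only [mul_smul_comm, wz_E, smul_add, smul_smul]
    rw [Finset.sum_add_distrib]
    have h1 : ∑ k ∈ Finset.range (n + 2),
        (q ^ k * (P q n).coeff k * (q - 1) ^ k) • (wy K q ^ k * wx K q ^ k)
        = ∑ k ∈ Finset.range (n + 1),
          ((P q n).coeff k * (q - 1) ^ k * q ^ k) • (wy K q ^ k * wx K q ^ k) := by
      rw [Finset.sum_range_succ, coeff_P_eq_zero q (Nat.lt_succ_self n)]
      simp only [mul_zero, zero_mul, zero_smul, add_zero]
      exact Finset.sum_congr rfl fun k _ => by ring_nf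
    have h2 : ∑ k ∈ Finset.range (n + 2),
        ((if k = 0 then 0 else q ^ (k - 1) * (P q n).coeff (k - 1)) * (q - 1) ^ k)
          • (wy K q ^ k * wx K q ^ k)
        = ∑ k ∈ Finset.range (n + 1),
          ((P q n).coeff k * (q - 1) ^ k * (q ^ k * (q - 1)))
            • (wy K q ^ (k + 1) * wx K q ^ (k + 1)) := by
      rw [Finset.sum_range_succ']
      simp only [Nat.succ_ne_zero, if_false, eq_self_iff_true, if_true, zero_mul, zero_smul, add_zero,
        Nat.add_sub_cancel]
      refine Finset.sum_congr rfl fun k _ => ?_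
      congr 1
      ring
    have h3 : ∑ k ∈ Finset.range (n + 2),
        ((P q (n + 1)).coeff k * (q - 1) ^ k) • (wy K q ^ k * wx K q ^ k)
        = ∑ k ∈ Finset.range (n + 2),
          ((q ^ k * (P q n).coeff k * (q - 1) ^ k) • (wy K q ^ k * wx K q ^ k)
            + ((if k = 0 then 0 else q ^ (k - 1) * (P q n).coeff (k - 1)) * (q - 1) ^ k)
              • (wy K q ^ k * wx K q ^ k)) :=
      Finset.sum_congr rfl fun k _ => by rw [coeff_P_succ, add_mul, add_smul]
    rw [h3, Finset.sum_add_distrib, h1, h2]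

lemma P_comp {l : ℕ} (hq : IsPrimitiveRoot q l) :
    (P q l).comp (C q * X) = P q l := by
  have hX : (1 + X : K[X]) ≠ 0 := fun h => by
    have := congrArg (fun p : K[X] => p.coeff 0) h
    simp at this
  apply mul_left_cancel₀ hX
  rw [← P_succ', P_succ, hq.pow_eq_one, C_1]
  ring

lemma coeff_P_mid {l k : ℕ} (hq : IsPrimitiveRoot q l) (h0 : 0 < k) (hk : k < l) :
    (P q l).coeff k = 0 := by
  have h := congrArg (fun p : K[X] => p.coeff k) (P_comp q hq)
  simp only [coeff_comp_C_mul_X] at h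
  by_contra hc
  exact hq.pow_ne_one_of_pos_of_lt h0.ne' hk (mul_right_cancel₀ hc (by rw [h, one_mul]))

lemma coeff_P_zero (n : ℕ) : (P q n).coeff 0 = 1 := by
  rw [P, coeff_zero_eq_eval_zero, eval_prod]
  simp

lemma coeff_P_top (hq0 : q ≠ 0) (n : ℕ) :
    (P q n).coeff n = q ^ (n * (n - 1) / 2) := by
  have hfac : ∀ i : ℕ, (1 + C (q ^ i) * X : K[X]) = C (q ^ i) * X + C 1 := fun i => by
    rw [C_1, add_comm]
  have hne : ∀ i ∈ Finset.range n, (1 + C (q ^ i) * X : K[X]) ≠ 0 := fun i _ => by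
    intro h
    have := congrArg (fun p : K[X] => p.coeff 0) h
    simp at this
  have hd1 : ∀ i : ℕ, (1 + C (q ^ i) * X : K[X]).natDegree = 1 := fun i => by
    rw [hfac i]; exact natDegree_linear (pow_ne_zero i hq0)
  have hlc : ∀ i : ℕ, (1 + C (q ^ i) * X : K[X]).leadingCoeff = q ^ i := fun i => by
    rw [hfac i]; exact leadingCoeff_linear (pow_ne_zero i hq0)
  have hdeg : (P q n).natDegree = n := by
    rw [P, natDegree_prod _ _ hne]
    simp only [hd1, Finset.sum_const, smul_eq_mul, mul_one, Finset.card_range]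
  have hl : (P q n).coeff n = (P q n).leadingCoeff := by
    rw [Polynomial.leadingCoeff, hdeg]
  rw [hl, P, leadingCoeff_prod]
  simp only [hlc]
  rw [Finset.prod_pow_eq_pow_sum, Finset.sum_range_id]

end WeylAux

theorem weyl_zl (K : Type*) [Field K] (q : K) (l : ℕ) (hl : 2 ≤ l)
    (hq : IsPrimitiveRoot q l) :
    ((1 : Weyl K q) + (q - 1) • (wy K q * wx K q)) ^ l =
      1 + (q ^ (l * (l - 1) / 2) * (q - 1) ^ l) • (wy K q ^ l * wx K q ^ l) := by
  have hq0 : q ≠ 0 := hq.ne_zero (by omega)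
  have h := WeylAux.z_pow q l
  rw [WeylAux.wz] at h
  rw [h, Finset.sum_range_succ, WeylAux.coeff_P_top q hq0 l]
  congr 1
  rw [Finset.sum_eq_single_of_mem 0 (Finset.mem_range.2 (by omega))
    (fun k hk hne => by
      rw [WeylAux.coeff_P_mid q hq (Nat.pos_of_ne_zero hne) (Finset.mem_range.1 hk)]
      simp)]
  rw [WeylAux.coeff_P_zero]
  simp
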